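/- Let f : ℝ^d → ℝ be convex and differentiable, let x* be a global minimizer with f* = f(x*), and let H, L, D > 0. Let (x^k) be a sequence with ‖x^k − x*‖ ≤ D for all k, such that for every k at least one of the following holds: f(x^{k+1}) ≤ f(x^k) − (1/(3√H))·‖∇f(x^k)‖^{3/2}, or f(x^{k+1}) ≤ f(x^k) − (2/(9L))·‖∇f(x^k)‖². Then for every k: (i) if (f(x^k) − f*)^{1/2} ≥ (3/2)·L·D²/√(H·D³), then f(x^{k+1}) − f* ≤ f(x^k) − f* − (1/(3√(H·D³)))·(f(x^k) − f*)^{3/2}; and (ii) if (f(x^k) − f*)^{1/2} ≤ (3/2)·L·D²/√(H·D³), then f(x^{k+1}) − f* ≤ f(x^k) − f* − (2/(9·L·D²))·(f(x^k) − f*)². -/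

import Mathlib

open scoped RealInnerProductSpace

lemma grad_support_ineq {d : ℕ} (f : EuclideanSpace ℝ (Fin d) → ℝ)
    (hf : Differentiable ℝ f) (hconv : ConvexOn ℝ Set.univ f)
    (a b : EuclideanSpace ℝ (Fin d)) :
    f a + ⟪gradient f a, b - a⟫ ≤ f b := by
  set v := b - a with hv
  have hφ : HasDerivAt (fun t : ℝ => a + t • v) v 0 := by
    simpa using ((hasDerivAt_id (0:ℝ)).smul_const v).const_add a
  have hg : HasDerivAt (fun t : ℝ => f (a + t • v)) ((fderiv ℝ f a) v) 0 := by
    have := (hf (a + (0:ℝ) • v)).hasFDerivAt.comp_hasDerivAt 0 hφ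
    rw [zero_smul, add_zero] at this; exact this
  have hgc : ConvexOn ℝ Set.univ (fun t : ℝ => f (a + t • v)) := by
    have := hconv.comp_affineMap
      (AffineMap.lineMap a b : ℝ →ᵃ[ℝ] EuclideanSpace ℝ (Fin d))
    have he : (f ∘ (AffineMap.lineMap a b : ℝ →ᵃ[ℝ] EuclideanSpace ℝ (Fin d)))
        = fun t : ℝ => f (a + t • v) := by
      ext t
      simp only [Function.comp_apply]
      congr 1
      rw [AffineMap.lineMap_apply, hv, vsub_eq_sub, vadd_eq_add]
      abel
    rw [← he]
    simpa using this
  have hslope := hgc.le_slope_of_hasDerivAt (Set.mem_univ 0) (Set.mem_univ 1)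
    one_pos hg
  have hfd : (fderiv ℝ f a) v = ⟪gradient f a, v⟫ := by
    have h1 : HasFDerivAt f ((InnerProductSpace.toDual ℝ _) (gradient f a)) a :=
      hasGradientAt_iff_hasFDerivAt.mp (hf a).hasGradientAt
    rw [h1.fderiv]
    simp [InnerProductSpace.toDual_apply_apply]
  have : slope (fun t : ℝ => f (a + t • v)) 0 1 = f b - f a := by
    simp [slope, hv]
  rw [this, hfd] at hslope
  linarith

/-- two-regime per-step decrease for a sequence enjoying either a
cubic-model or a quadratic-model gradient decrease. -/
theorem two_regime_lemma {d : ℕ}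
    (f : EuclideanSpace ℝ (Fin d) → ℝ)
    (hf : Differentiable ℝ f) (hconv : ConvexOn ℝ Set.univ f)
    (xstar : EuclideanSpace ℝ (Fin d)) (hmin : ∀ y, f xstar ≤ f y)
    (H L D : ℝ) (hH : 0 < H) (hL : 0 < L) (hD : 0 < D)
    (x : ℕ → EuclideanSpace ℝ (Fin d))
    (hdist : ∀ k, ‖x k - xstar‖ ≤ D)
    (hstep : ∀ k,
      f (x (k+1)) ≤ f (x k)
          - (1/(3*Real.sqrt H)) * ‖gradient f (x k)‖ ^ ((3:ℝ)/2) ∨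
      f (x (k+1)) ≤ f (x k) - (2/(9*L)) * ‖gradient f (x k)‖^2) :
    ∀ k : ℕ,
      ((f (x k) - f xstar) ^ ((1:ℝ)/2) ≥ (3/2) * L * D^2 / Real.sqrt (H * D^3) →
        f (x (k+1)) - f xstar ≤ f (x k) - f xstar
          - (1/(3*Real.sqrt (H * D^3))) * (f (x k) - f xstar) ^ ((3:ℝ)/2)) ∧
      ((f (x k) - f xstar) ^ ((1:ℝ)/2) ≤ (3/2) * L * D^2 / Real.sqrt (H * D^3) →
        f (x (k+1)) - f xstar ≤ f (x k) - f xstar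
          - (2/(9*L*D^2)) * (f (x k) - f xstar)^2) := by
  intro k
  set g := gradient f (x k) with hg
  set Δ := f (x k) - f xstar with hΔdef
  have hΔ0 : 0 ≤ Δ := sub_nonneg.mpr (hmin (x k))
  set a := ‖g‖ with ha
  have ha0 : 0 ≤ a := norm_nonneg _
  -- convexity: Δ ≤ a * D
  have hsupp := grad_support_ineq f hf hconv (x k) xstar
  have hip : ⟪g, xstar - x k⟫ = - ⟪g, x k - xstar⟫ := by
    rw [show xstar - x k = -(x k - xstar) by abel, inner_neg_right]
  have hkey : Δ ≤ a * D := by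
    have h1 : Δ ≤ ⟪g, x k - xstar⟫ := by rw [hΔdef]; rw [hip] at hsupp; linarith
    have h2 : ⟪g, x k - xstar⟫ ≤ a * ‖x k - xstar‖ := real_inner_le_norm g _
    have h3 : a * ‖x k - xstar‖ ≤ a * D :=
      mul_le_mul_of_nonneg_left (hdist k) ha0
    linarith
  have haD : Δ / D ≤ a := by rw [div_le_iff₀ hD]; linarith
  set S := Real.sqrt H with hS
  set T := Real.sqrt (H * D ^ 3) with hTdef
  have hSpos : 0 < S := Real.sqrt_pos.mpr hH
  have hTpos : 0 < T := Real.sqrt_pos.mpr (by positivity)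
  set DT := D ^ ((3:ℝ)/2) with hDT
  have hDTpos : 0 < DT := Real.rpow_pos_of_pos hD _
  have hT : T = S * DT := by
    rw [hTdef, hS, hDT, Real.sqrt_mul hH.le, Real.sqrt_eq_rpow (D^3),
      ← Real.rpow_natCast D 3, ← Real.rpow_mul hD.le]
    norm_num
  set A := Δ ^ ((3:ℝ)/2) with hA
  set B := Δ ^ ((1:ℝ)/2) with hB
  have hA0 : 0 ≤ A := Real.rpow_nonneg hΔ0 _
  have hB0 : 0 ≤ B := Real.rpow_nonneg hΔ0 _
  have hAB : Δ ^ 2 = A * B := by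
    rw [hA, hB, ← Real.rpow_natCast Δ 2, ← Real.rpow_add' hΔ0 (by norm_num)]
    norm_num
  -- cubic bound
  have h32 : A / DT ≤ a ^ ((3:ℝ)/2) := by
    rw [hA, hDT, ← Real.div_rpow hΔ0 hD.le]
    exact Real.rpow_le_rpow (by positivity) haD (by norm_num)
  have hSne : S ≠ 0 := ne_of_gt hSpos
  have hTne : T ≠ 0 := ne_of_gt hTpos
  have hDTne : DT ≠ 0 := ne_of_gt hDTpos
  have hLne : L ≠ 0 := ne_of_gt hL
  have hDne : D ≠ 0 := ne_of_gt hD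
  have hcb : (1/(3*T)) * A ≤ (1/(3*S)) * a ^ ((3:ℝ)/2) := by
    have heq : (1/(3*T)) * A = (1/(3*S)) * (A / DT) := by
      rw [hT]; field_simp
    rw [heq]
    exact mul_le_mul_of_nonneg_left h32 (by positivity)
  -- quadratic bound
  have h2 : Δ^2 / D^2 ≤ a^2 := by
    rw [← div_pow]; exact pow_le_pow_left₀ (by positivity) haD 2
  have hqb : (2/(9*L*D^2)) * Δ^2 ≤ (2/(9*L)) * a^2 := by
    have heq : (2/(9*L*D^2)) * Δ^2 = (2/(9*L)) * (Δ^2/D^2) := by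
      field_simp
    rw [heq]
    exact mul_le_mul_of_nonneg_left h2 (by positivity)
  have hstepk := hstep k
  constructor
  · -- regime (i)
    intro hBge
    have hBge' : (3/2) * L * D^2 / T ≤ B := hBge
    rcases hstepk with hc | hq
    · -- cubic step
      have := hcb
      rw [hΔdef] at *
      linarith
    · -- quadratic step; cross bound
      have hcross : (1/(3*T)) * A ≤ (2/(9*L*D^2)) * (A*B) := by
        have hc : (2/(9*L*D^2)) * ((3/2)*L*D^2/T) = 1/(3*T) := by
          field_simp; ring
        calc (1/(3*T))*A = ((2/(9*L*D^2)) * ((3/2)*L*D^2/T)) * A := by rw [hc]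
          _ ≤ ((2/(9*L*D^2)) * B) * A := by
              apply mul_le_mul_of_nonneg_right _ hA0
              exact mul_le_mul_of_nonneg_left hBge' (by positivity)
          _ = (2/(9*L*D^2))*(A*B) := by ring
      rw [hAB] at hqb
      linarith
  · -- regime (ii)
    intro hBle
    have hBle' : B ≤ (3/2) * L * D^2 / T := hBle
    rcases hstepk with hc | hq
    · -- cubic step; cross bound
      have hcross : (2/(9*L*D^2)) * (A*B) ≤ (1/(3*T)) * A := by
        have hc : (2/(9*L*D^2)) * ((3/2)*L*D^2/T) = 1/(3*T) := by
          field_simp; ring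
        calc (2/(9*L*D^2))*(A*B) = ((2/(9*L*D^2)) * B) * A := by ring
          _ ≤ ((2/(9*L*D^2)) * ((3/2)*L*D^2/T)) * A := by
              apply mul_le_mul_of_nonneg_right _ hA0
              exact mul_le_mul_of_nonneg_left hBle' (by positivity)
          _ = (1/(3*T)) * A := by rw [hc]
      rw [hAB]
      linarith
    · linarith
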